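/- Fix $b \geq 1$ and let $H_\ell = G_\ell - E(G_B)$ be the graph of the previous construction with the edges of $G_B$ deleted (so the $b+1$ paths now end in pendant trees/leaves on the $G_B$ side). Then in the path-restricted game with $b$ fires and $b$ firefighters, the total burnt count over all initial configurations is $\Omega(\ell^{b+1})$: there are at least $(\ell/2)^b$ configurations placing one fire on each of $b$ chosen paths at distance at least $\ell/4$ from both ends, and in each such configuration at least $\ell/4$ vertices burn regardless of firefighter play. -/

import Mathlib

open SimpleGraph Finset
open scoped Classical

namespace FF

variable {V : Type*} [Fintype V] [DecidableEq V]

/-- One step of fire spread: the fire spreads to every undefended neighbour of a burnt vertex. -/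
noncomputable def spread (G : SimpleGraph V) (D B : Finset V) : Finset V :=
  B ∪ Finset.univ.filter (fun v => v ∉ D ∧ ∃ u ∈ B, G.Adj u v)

/-- Cumulative defended set of a classic strategy. -/
noncomputable def cumDef (σ : ℕ → Finset V) (t : ℕ) : Finset V :=
  (Finset.range (t + 1)).biUnion σ

/-- Burnt set at time `t` in the classic game. -/
noncomputable def burnt (G : SimpleGraph V) (F : Finset V) (σ : ℕ → Finset V) : ℕ → Finset V
  | 0 => F
  | t + 1 => spread G (cumDef σ t) (burnt G F σ t)

/-- A classic strategy is valid for `b` firefighters. -/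
def ValidClassic (G : SimpleGraph V) (F : Finset V) (b : ℕ) (σ : ℕ → Finset V) : Prop :=
  ∀ t, (σ t).card ≤ b ∧ ∀ v ∈ σ t, v ∉ burnt G F σ t

/-- Final burnt set (the process stabilizes after `|V|` steps). -/
noncomputable def finalBurnt (G : SimpleGraph V) (F : Finset V) (σ : ℕ → Finset V) : Finset V :=
  burnt G F σ (Fintype.card V)

/-- Maximum number of vertices saved in the classic game. -/
noncomputable def MVS (G : SimpleGraph V) (F : Finset V) (b : ℕ) : ℕ :=
  sSup {k | ∃ σ : ℕ → Finset V, ValidClassic G F b σ ∧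
    k = Fintype.card V - (finalBurnt G F σ).card}

/-- Defended set induced by firefighter positions up to time `t`. -/
noncomputable def posDef {b : ℕ} (p : ℕ → Fin b → V) (t : ℕ) : Finset V :=
  (Finset.range (t + 1)).biUnion (fun τ => Finset.univ.image (p τ))

/-- Burnt set at time `t` in the position-based games. -/
noncomputable def pburnt (G : SimpleGraph V) (F : Finset V) {b : ℕ}
    (p : ℕ → Fin b → V) : ℕ → Finset V
  | 0 => F
  | t + 1 => spread G (posDef p t) (pburnt G F p t)

/-- Validity for the distance-restricted game: firefighters never occupy a burnt
vertex and move graph distance at most `d` each turn. -/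
def ValidDR (G : SimpleGraph V) (F : Finset V) (d : ℕ) {b : ℕ} (p : ℕ → Fin b → V) : Prop :=
  (∀ t i, p t i ∉ pburnt G F p t) ∧ ∀ t i, G.dist (p t i) (p (t + 1) i) ≤ d

/-- Distance-restricted maximum vertices saved. -/
noncomputable def DRMVS (G : SimpleGraph V) (F : Finset V) (b d : ℕ) : ℕ :=
  sSup {k | ∃ p : ℕ → Fin b → V, ValidDR G F d p ∧
    k = Fintype.card V - (pburnt G F p (Fintype.card V)).card}

/-- Validity for the path-restricted game with unlimited distance: firefighters
move along walks of unburnt vertices. -/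
def ValidPR (G : SimpleGraph V) (F : Finset V) {b : ℕ} (p : ℕ → Fin b → V) : Prop :=
  (∀ t i, p t i ∉ pburnt G F p t) ∧
    ∀ t i, ∃ w : G.Walk (p t i) (p (t + 1) i),
      ∀ v ∈ w.support, v ∉ pburnt G F p (t + 1)

/-- Path-restricted (unlimited distance) maximum vertices saved. -/
noncomputable def PRMVS (G : SimpleGraph V) (F : Finset V) (b : ℕ) : ℕ :=
  sSup {k | ∃ p : ℕ → Fin b → V, ValidPR G F p ∧
    k = Fintype.card V - (pburnt G F p (Fintype.card V)).card}

/-- Validity for the distance- and path-restricted game. -/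
def ValidDPR (G : SimpleGraph V) (F : Finset V) (d : ℕ) {b : ℕ} (p : ℕ → Fin b → V) : Prop :=
  (∀ t i, p t i ∉ pburnt G F p t) ∧
    ∀ t i, ∃ w : G.Walk (p t i) (p (t + 1) i), w.length ≤ d ∧
      ∀ v ∈ w.support, v ∉ pburnt G F p (t + 1)

/-- Distance- and path-restricted maximum vertices saved. -/
noncomputable def DPRMVS (G : SimpleGraph V) (F : Finset V) (b d : ℕ) : ℕ :=
  sSup {k | ∃ p : ℕ → Fin b → V, ValidDPR G F d p ∧
    k = Fintype.card V - (pburnt G F p (Fintype.card V)).card}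

/-- Burnt count in the single-defence game: the firefighter defends a single
vertex `w ≠ s` and the fire then burns everything reachable from `s` avoiding `w`. -/
noncomputable def sdBurnt (G : SimpleGraph V) (s : V) : ℕ :=
  sInf {k | ∃ w, w ≠ s ∧
    k = (Finset.univ.filter (fun x => ∃ q : G.Walk s x, w ∉ q.support)).card}


section Lemmas
set_option linter.unusedSectionVars false

lemma subset_spread (G : SimpleGraph V) (D B : Finset V) : B ⊆ spread G D B :=
  Finset.subset_union_left

lemma pburnt_subset_succ (G : SimpleGraph V) (F : Finset V) {b : ℕ}
    (p : ℕ → Fin b → V) (t : ℕ) : pburnt G F p t ⊆ pburnt G F p (t + 1) :=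
  subset_spread _ _ _

lemma pburnt_mono (G : SimpleGraph V) (F : Finset V) {b : ℕ}
    (p : ℕ → Fin b → V) {s t : ℕ} (h : s ≤ t) : pburnt G F p s ⊆ pburnt G F p t := by
  induction t with
  | zero => simp_all
  | succ t ih =>
    rcases Nat.lt_or_ge s (t+1) with h' | h'
    · exact (ih (by omega)).trans (pburnt_subset_succ G F p t)
    · have : s = t + 1 := by omega
      subst this; exact subset_rfl

lemma fire_subset_pburnt (G : SimpleGraph V) (F : Finset V) {b : ℕ}
    (p : ℕ → Fin b → V) (t : ℕ) : F ⊆ pburnt G F p t :=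
  pburnt_mono G F p (Nat.zero_le t)

lemma pburnt_step (G : SimpleGraph V) (F : Finset V) {b : ℕ}
    (p : ℕ → Fin b → V) {t : ℕ} {u v : V}
    (hu : u ∈ pburnt G F p t) (ha : G.Adj u v) (hd : v ∉ posDef p t) :
    v ∈ pburnt G F p (t + 1) := by
  show v ∈ spread G (posDef p t) (pburnt G F p t)
  unfold spread
  rw [Finset.mem_union, Finset.mem_filter]
  exact Or.inr ⟨Finset.mem_univ v, hd, u, hu, ha⟩

lemma mem_posDef_iff {b : ℕ} (p : ℕ → Fin b → V) (t : ℕ) (v : V) :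
    v ∈ posDef p t ↔ ∃ τ ≤ t, ∃ i, p τ i = v := by
  unfold posDef
  simp [Finset.mem_biUnion, Nat.lt_succ_iff, eq_comm]

end Lemmas

end FF

open FF

/-- One-directional edge description of the construction `G_ℓ`: the disjoint
union of `G_A`, `G_B` and, for each vertex `w` of `G_B`, a path with `ℓ`
internal vertices joining `f w ∈ G_A` to `w ∈ G_B`. -/
def glink {A B : Type*} (GA : SimpleGraph A) (GB : SimpleGraph B) (f : B → A) (ℓ : ℕ) :
    (A ⊕ B ⊕ (B × Fin ℓ)) → (A ⊕ B ⊕ (B × Fin ℓ)) → Prop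
  | Sum.inl a, Sum.inl a2 => GA.Adj a a2
  | Sum.inr (Sum.inl b1), Sum.inr (Sum.inl b2) => GB.Adj b1 b2
  | Sum.inl a, Sum.inr (Sum.inr x) => a = f x.1 ∧ (x.2 : ℕ) = 0
  | Sum.inr (Sum.inr x), Sum.inr (Sum.inr y) => x.1 = y.1 ∧ (y.2 : ℕ) = (x.2 : ℕ) + 1
  | Sum.inr (Sum.inl b1), Sum.inr (Sum.inr x) => b1 = x.1 ∧ (x.2 : ℕ) = ℓ - 1
  | _, _ => False

/-- The graph `G_ℓ` of the construction. -/
def Gconn {A B : Type*} (GA : SimpleGraph A) (GB : SimpleGraph B) (f : B → A) (ℓ : ℕ) :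
    SimpleGraph (A ⊕ B ⊕ (B × Fin ℓ)) where
  Adj x y := glink GA GB f ℓ x y ∨ glink GA GB f ℓ y x
  symm := ⟨fun x y h => h.symm⟩
  loopless := ⟨by
    rintro (a | b | x) h
    · exact GA.irrefl (by rcases h with h | h <;> exact h)
    · exact GB.irrefl (by rcases h with h | h <;> exact h)
    · rcases h with h | h <;> exact absurd h.2 (by omega)⟩


/-- Leaf-side segment of path `j` beyond position `x`. -/
def inSeg {A B : Type*} (ℓ : ℕ) (j : B) (x : ℕ) : (A ⊕ B ⊕ (B × Fin ℓ)) → Prop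
  | Sum.inr (Sum.inl j') => j' = j
  | Sum.inr (Sum.inr y) => y.1 = j ∧ x < (y.2 : ℕ)
  | _ => False

lemma inSeg_unique {A B : Type*} {ℓ : ℕ} {j j' : B} {x x' : ℕ}
    {v : A ⊕ B ⊕ (B × Fin ℓ)} (h : inSeg ℓ j x v) (h' : inSeg ℓ j' x' v) : j = j' := by
  rcases v with a | b | y
  · exact absurd h (by simp [inSeg])
  · simp only [inSeg] at h h'; exact h.symm.trans h'
  · simp only [inSeg] at h h'; exact h.1.symm.trans h'.1

lemma adj_path {A B : Type*} (GA : SimpleGraph A) (f : B → A) {ℓ : ℕ} (j : B)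
    {k : ℕ} (h : k + 1 < ℓ) :
    (Gconn GA (⊥ : SimpleGraph B) f ℓ).Adj
      (Sum.inr (Sum.inr (j, ⟨k, by omega⟩))) (Sum.inr (Sum.inr (j, ⟨k+1, h⟩))) :=
  Or.inl ⟨rfl, rfl⟩

lemma cross_edge {A B : Type*} {GA : SimpleGraph A} {f : B → A} {ℓ : ℕ} {j : B} {x : ℕ}
    (hx1 : 1 ≤ x) (hx2 : x + 1 < ℓ) {u v : A ⊕ B ⊕ (B × Fin ℓ)}
    (h : (Gconn GA (⊥ : SimpleGraph B) f ℓ).Adj u v)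
    (hv : inSeg ℓ j x v) (hu : ¬ inSeg ℓ j x u) :
    u = Sum.inr (Sum.inr (j, ⟨x, by omega⟩)) := by
  rcases u with a | b | y <;> rcases v with a' | b' | y' <;>
    simp only [inSeg] at hv hu <;>
    rcases h with h | h <;>
    simp only [glink, SimpleGraph.bot_adj] at h <;> try tauto
  · -- u = inl a, v = inr inr y', glink a y' : a = f y'.1 ∧ y'.2 = 0
    exact absurd h.2 (by omega)
  · -- u = inr inl b, v = inr inr y' : b = y'.1 ∧ y'.2 = ℓ - 1
    exact absurd (h.1.trans hv.1) hu
  · -- u = inr inr y, v = inr inl b' : glink v u : b' = y.1 ∧ y.2 = ℓ-1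
    exfalso; apply hu; exact ⟨h.1.symm.trans hv, by omega⟩
  · -- u = inr inr y, v = inr inr y', glink u v : y.1 = y'.1 ∧ y'.2 = y.2+1
    have hj : y.1 = j := h.1.trans hv.1
    have : (y.2 : ℕ) = x := by
      rcases Nat.lt_or_ge x (y.2 : ℕ) with h' | h'
      · exact absurd ⟨hj, h'⟩ hu
      · omega
    rcases y with ⟨y1, y2⟩
    simp only [Sum.inr.injEq, Prod.mk.injEq]
    exact ⟨hj, Fin.ext this⟩
  · -- glink v u : y'.1 = y.1 ∧ y.2 = y'.2+1
    exfalso; apply hu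
    exact ⟨h.1.symm.trans hv.1, by omega⟩

lemma walk_through {A B : Type*} {GA : SimpleGraph A} {f : B → A} {ℓ : ℕ} {j : B} {x : ℕ}
    (hx1 : 1 ≤ x) (hx2 : x + 1 < ℓ) {u v : A ⊕ B ⊕ (B × Fin ℓ)}
    (w : (Gconn GA (⊥ : SimpleGraph B) f ℓ).Walk u v)
    (hu : ¬ inSeg ℓ j x u) (hv : inSeg ℓ j x v) :
    (Sum.inr (Sum.inr (j, ⟨x, by omega⟩)) : A ⊕ B ⊕ (B × Fin ℓ)) ∈ w.support := by
  induction w with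
  | nil => exact absurd hv hu
  | @cons a b c hab w ih =>
    by_cases hb : inSeg ℓ j x b
    · have := cross_edge hx1 hx2 hab hb hu
      rw [SimpleGraph.Walk.support_cons]
      rw [← this]
      exact List.mem_cons_self
    · rw [SimpleGraph.Walk.support_cons]
      exact List.mem_cons_of_mem _ (ih hb hv)


lemma core_burnt {A B : Type*} [Fintype A] [DecidableEq A] [Fintype B] [DecidableEq B]
    {b : ℕ} (hb : 1 ≤ b) (GA : SimpleGraph A) (f : B → A)
    (hcB : Fintype.card B = b + 1) {ℓ : ℕ} (hl : 16 ≤ ℓ) (b₀ : B)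
    (x : {j : B // j ≠ b₀} → Fin ℓ) (hx : ∀ j, ℓ/4 ≤ (x j : ℕ) ∧ (x j : ℕ) < ℓ/2)
    (p : ℕ → Fin b → (A ⊕ B ⊕ (B × Fin ℓ)))
    (hp : FF.ValidPR (Gconn GA (⊥ : SimpleGraph B) f ℓ)
      (Finset.univ.image fun j : {j : B // j ≠ b₀} => Sum.inr (Sum.inr (j.1, x j))) p) :
    ℓ/4 ≤ (FF.pburnt (Gconn GA (⊥ : SimpleGraph B) f ℓ)
      (Finset.univ.image fun j : {j : B // j ≠ b₀} => Sum.inr (Sum.inr (j.1, x j))) p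
      (Fintype.card (A ⊕ B ⊕ (B × Fin ℓ)))).card := by
  set G := Gconn GA (⊥ : SimpleGraph B) f ℓ with hG
  set F : Finset (A ⊕ B ⊕ (B × Fin ℓ)) :=
    Finset.univ.image fun j : {j : B // j ≠ b₀} => Sum.inr (Sum.inr (j.1, x j)) with hF
  set n := Fintype.card (A ⊕ B ⊕ (B × Fin ℓ)) with hn
  have hcardB : 1 ≤ Fintype.card B := by omega
  have hnℓ : ℓ ≤ n := by
    have h1 : ℓ ≤ Fintype.card B * ℓ := Nat.le_mul_of_pos_left ℓ (by omega)
    have h2 : n = Fintype.card A + (Fintype.card B + Fintype.card B * ℓ) := by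
      simp [hn, Fintype.card_sum, Fintype.card_prod, Fintype.card_fin]
    omega
  have hFx : ∀ j : {j : B // j ≠ b₀},
      (Sum.inr (Sum.inr (j.1, x j)) : A ⊕ B ⊕ (B × Fin ℓ)) ∈ F :=
    fun j => Finset.mem_image_of_mem _ (Finset.mem_univ j)
  have hburnF : ∀ (t : ℕ) (j : {j : B // j ≠ b₀}),
      (Sum.inr (Sum.inr (j.1, x j)) : A ⊕ B ⊕ (B × Fin ℓ)) ∈ FF.pburnt G F p t :=
    fun t j => FF.fire_subset_pburnt G F p t (hFx j)
  have hx1 : ∀ j, 1 ≤ (x j : ℕ) := fun j => by have := hx j; omega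
  have hx2 : ∀ j, (x j : ℕ) + 1 < ℓ := fun j => by have := hx j; omega
  have hfin : ∀ j : {j : B // j ≠ b₀},
      (⟨(x j : ℕ), by have := hx2 j; omega⟩ : Fin ℓ) = x j := fun j => Fin.ext rfl
  -- firefighters outside a segment at time 0 stay outside
  have stayOut : ∀ (j : {j : B // j ≠ b₀}) (i : Fin b),
      ¬ inSeg ℓ j.1 (x j) (p 0 i) → ∀ t, ¬ inSeg ℓ j.1 (x j) (p t i) := by
    intro j i h0 t
    induction t with
    | zero => exact h0
    | succ t ih =>
      intro hseg
      obtain ⟨w, hw⟩ := hp.2 t i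
      have hmem := walk_through (hx1 j) (hx2 j) w ih hseg
      rw [hfin j] at hmem
      exact hw _ hmem (hburnF (t+1) j)
  -- firefighters inside a segment at time 0 stay inside
  have stayIn : ∀ (j : {j : B // j ≠ b₀}) (i : Fin b),
      inSeg ℓ j.1 (x j) (p 0 i) → ∀ t, inSeg ℓ j.1 (x j) (p t i) := by
    intro j i h0 t
    induction t with
    | zero => exact h0
    | succ t ih =>
      by_contra hseg
      obtain ⟨w, hw⟩ := hp.2 t i
      have hmem := walk_through (hx1 j) (hx2 j) w.reverse hseg ih
      rw [SimpleGraph.Walk.support_reverse, List.mem_reverse, hfin j] at hmem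
      exact hw _ hmem (hburnF (t+1) j)
  by_cases hcase : ∀ j : {j : B // j ≠ b₀}, ∃ i, inSeg ℓ j.1 (x j) (p 0 i)
  · -- every segment contains a firefighter: A-sides are unguarded
    choose φ hφ using hcase
    have hinj : Function.Injective φ := by
      intro j j' h
      have h1 := hφ j
      rw [h] at h1
      exact Subtype.ext (inSeg_unique h1 (hφ j'))
    have hcardJ : Fintype.card {j : B // j ≠ b₀} = b := by
      have h1 := Fintype.card_subtype_compl (fun j : B => j = b₀)
      have h2 : Fintype.card {j : B // j = b₀} = 1 := Fintype.card_subtype_eq b₀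
      have h3 : Fintype.card {j : B // j ≠ b₀} = Fintype.card {j : B // ¬ j = b₀} := rfl
      omega
    have hsurj : Function.Surjective φ :=
      ((Fintype.bijective_iff_injective_and_card φ).mpr
        ⟨hinj, by simp [hcardJ]⟩).2
    have hall : ∀ i : Fin b, ∃ j, inSeg ℓ j.1 (x j) (p 0 i) := by
      intro i
      obtain ⟨j, hj⟩ := hsurj i
      exact ⟨j, hj ▸ hφ j⟩
    have : Nonempty {j : B // j ≠ b₀} := by
      rw [← Fintype.card_pos_iff, hcardJ]; omega
    obtain ⟨j⟩ := this
    have hdef : ∀ (t : ℕ) (k : Fin ℓ), (k : ℕ) < (x j : ℕ) →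
        (Sum.inr (Sum.inr (j.1, k)) : A ⊕ B ⊕ (B × Fin ℓ)) ∉ FF.posDef p t := by
      intro t k hk hmem
      rw [FF.mem_posDef_iff] at hmem
      obtain ⟨τ, hτ, i, hpi⟩ := hmem
      obtain ⟨j', hj'⟩ := hall i
      have hin := stayIn j' i hj' τ
      rw [hpi] at hin
      simp only [inSeg] at hin
      obtain ⟨he, hlt⟩ := hin
      have : j = j' := Subtype.ext he
      subst this
      omega
    have hxlt : (x j : ℕ) < ℓ := (x j).isLt
    have hburn : ∀ t, t ≤ (x j : ℕ) →
        (Sum.inr (Sum.inr (j.1, ⟨(x j : ℕ) - t, by omega⟩)) : A ⊕ B ⊕ (B × Fin ℓ))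
          ∈ FF.pburnt G F p t := by
      intro t
      induction t with
      | zero =>
        intro _
        have := hburnF 0 j
        rwa [show (⟨(x j : ℕ) - 0, by omega⟩ : Fin ℓ) = x j from
          Fin.ext (Nat.sub_zero _)]
      | succ t ih =>
        intro ht
        have hb' := ih (by omega)
        have hk : (x j : ℕ) - (t+1) + 1 < ℓ := by omega
        have hadj := (adj_path GA f j.1 hk).symm
        have he : (⟨(x j : ℕ) - (t+1) + 1, hk⟩ : Fin ℓ)
            = ⟨(x j : ℕ) - t, by omega⟩ :=
          Fin.ext (show (x j : ℕ) - (t+1) + 1 = (x j : ℕ) - t by omega)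
        rw [he] at hadj
        exact FF.pburnt_step G F p hb' hadj
          (hdef t _ (show (x j : ℕ) - (t+1) < (x j : ℕ) by omega))
    have hsub : (Finset.range ((x j : ℕ) + 1)).image
        (fun t => (Sum.inr (Sum.inr (j.1, ⟨(x j : ℕ) - t, by omega⟩))
          : A ⊕ B ⊕ (B × Fin ℓ))) ⊆ FF.pburnt G F p n := by
      intro v hv
      simp only [Finset.mem_image, Finset.mem_range] at hv
      obtain ⟨t, ht, rfl⟩ := hv
      exact FF.pburnt_mono G F p (by omega) (hburn t (by omega))
    have hcard : ((Finset.range ((x j : ℕ) + 1)).image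
        (fun t => (Sum.inr (Sum.inr (j.1, ⟨(x j : ℕ) - t, by omega⟩))
          : A ⊕ B ⊕ (B × Fin ℓ)))).card = (x j : ℕ) + 1 := by
      rw [Finset.card_image_of_injOn, Finset.card_range]
      intro t ht t' ht' he
      simp only [Finset.coe_range, Set.mem_Iio] at ht ht'
      simp only [Sum.inr.injEq, Prod.mk.injEq, Fin.mk.injEq] at he
      omega
    have := Finset.card_le_card hsub
    rw [hcard] at this
    have := hx j
    omega
  · -- some segment has no firefighter: its leaf side is unguarded
    push_neg at hcase
    obtain ⟨j, hj0⟩ := hcase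
    have hstay : ∀ (t : ℕ) (i : Fin b), ¬ inSeg ℓ j.1 (x j) (p t i) :=
      fun t i => stayOut j i (hj0 i) t
    have hdef : ∀ (t : ℕ) (k : Fin ℓ), (x j : ℕ) < (k : ℕ) →
        (Sum.inr (Sum.inr (j.1, k)) : A ⊕ B ⊕ (B × Fin ℓ)) ∉ FF.posDef p t := by
      intro t k hk hmem
      rw [FF.mem_posDef_iff] at hmem
      obtain ⟨τ, hτ, i, hpi⟩ := hmem
      apply hstay τ i
      rw [hpi]
      exact ⟨rfl, hk⟩
    have hburn : ∀ t, ∀ (h : (x j : ℕ) + t < ℓ),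
        (Sum.inr (Sum.inr (j.1, ⟨(x j : ℕ) + t, h⟩)) : A ⊕ B ⊕ (B × Fin ℓ))
          ∈ FF.pburnt G F p t := by
      intro t
      induction t with
      | zero =>
        intro h
        have heq : (⟨(x j : ℕ) + 0, h⟩ : Fin ℓ) = x j := Fin.ext (Nat.add_zero _)
        rw [heq]
        exact hburnF 0 j
      | succ t ih =>
        intro h
        have hk : (x j : ℕ) + t + 1 < ℓ := by omega
        have hb' := ih (by omega)
        have hadj := adj_path GA f j.1 hk
        exact FF.pburnt_step G F p hb' hadj
          (hdef t _ (show (x j : ℕ) < (x j : ℕ) + t + 1 by omega))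
    have hIco : ∀ m ∈ Finset.Ico ((x j : ℕ)) ℓ, m < ℓ :=
      fun m hm => (Finset.mem_Ico.mp hm).2
    have hsub : ((Finset.Ico ((x j : ℕ)) ℓ).attachFin hIco).image
        (fun k : Fin ℓ => (Sum.inr (Sum.inr (j.1, k)) : A ⊕ B ⊕ (B × Fin ℓ)))
        ⊆ FF.pburnt G F p n := by
      intro v hv
      simp only [Finset.mem_image] at hv
      obtain ⟨k, hk, rfl⟩ := hv
      rw [Finset.mem_attachFin, Finset.mem_Ico] at hk
      have h : (x j : ℕ) + ((k : ℕ) - (x j : ℕ)) < ℓ := by omega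
      have h1 := hburn ((k : ℕ) - (x j : ℕ)) h
      have heq : (⟨(x j : ℕ) + ((k : ℕ) - (x j : ℕ)), h⟩ : Fin ℓ) = k :=
        Fin.ext (show (x j : ℕ) + ((k : ℕ) - (x j : ℕ)) = (k : ℕ) by omega)
      rw [heq] at h1
      exact FF.pburnt_mono G F p (show (k : ℕ) - (x j : ℕ) ≤ n by omega) h1
    have hinj2 : Function.Injective
        (fun k : Fin ℓ => (Sum.inr (Sum.inr (j.1, k)) : A ⊕ B ⊕ (B × Fin ℓ))) := by
      intro k k' hkk
      simp only [Sum.inr.injEq, Prod.mk.injEq] at hkk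
      exact hkk.2
    have hcard : (((Finset.Ico ((x j : ℕ)) ℓ).attachFin hIco).image
        (fun k : Fin ℓ => (Sum.inr (Sum.inr (j.1, k)) : A ⊕ B ⊕ (B × Fin ℓ)))).card
        = ℓ - (x j : ℕ) := by
      rw [Finset.card_image_of_injective _ hinj2, Finset.card_attachFin, Nat.card_Ico]
    have hle := Finset.card_le_card hsub
    rw [hcard] at hle
    have hxj := hx j
    omega

theorem stmt12 {A B : Type*} [Fintype A] [DecidableEq A] [Fintype B] [DecidableEq B]
    (b : ℕ) (hb : 1 ≤ b)
    (GA : SimpleGraph A) (hGA : GA.Connected)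
    (hcB : Fintype.card B = b + 1) (hcA : b + 1 ≤ Fintype.card A)
    (f : B → A) (hf : Function.Injective f) :
    ∃ c N : ℕ, 0 < c ∧ ∀ ℓ : ℕ, N ≤ ℓ →
      ℓ ^ (b + 1) ≤ c *
        ∑ F ∈ (Finset.univ : Finset (A ⊕ B ⊕ (B × Fin ℓ))).powersetCard b,
          (Fintype.card (A ⊕ B ⊕ (B × Fin ℓ)) -
            FF.PRMVS (Gconn GA (⊥ : SimpleGraph B) f ℓ) F b) := by
  classical
  refine ⟨5 ^ (b + 1), 16, by positivity, ?_⟩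
  intro ℓ hl
  obtain ⟨b₀⟩ : Nonempty B := Fintype.card_pos_iff.mp (by omega)
  have hcardJ : Fintype.card {j : B // j ≠ b₀} = b := by
    have h1 := Fintype.card_subtype_compl (fun j : B => j = b₀)
    have h2 : Fintype.card {j : B // j = b₀} = 1 := Fintype.card_subtype_eq b₀
    have h3 : Fintype.card {j : B // j ≠ b₀} = Fintype.card {j : B // ¬ j = b₀} := rfl
    omega
  have hn : ℓ ≤ Fintype.card (A ⊕ B ⊕ (B × Fin ℓ)) := by
    have h1 : ℓ ≤ Fintype.card B * ℓ := Nat.le_mul_of_pos_left ℓ (by omega)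
    have h2 : Fintype.card (A ⊕ B ⊕ (B × Fin ℓ))
        = Fintype.card A + (Fintype.card B + Fintype.card B * ℓ) := by
      simp [Fintype.card_sum, Fintype.card_prod, Fintype.card_fin]
    omega
  have hS : ∀ m ∈ Finset.Ico (ℓ/4) (ℓ/2), m < ℓ := fun m hm => by
    have := (Finset.mem_Ico.mp hm).2; omega
  set S : Finset (Fin ℓ) := (Finset.Ico (ℓ/4) (ℓ/2)).attachFin hS with hSdef
  set T : Finset ({j : B // j ≠ b₀} → Fin ℓ) := Fintype.piFinset (fun _ => S) with hTdef
  set Φ : ({j : B // j ≠ b₀} → Fin ℓ) → Finset (A ⊕ B ⊕ (B × Fin ℓ)) :=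
    fun g => Finset.univ.image
      (fun j : {j : B // j ≠ b₀} => Sum.inr (Sum.inr (j.1, g j))) with hΦdef
  have hxg : ∀ g ∈ T, ∀ j, ℓ/4 ≤ (g j : ℕ) ∧ (g j : ℕ) < ℓ/2 := by
    intro g hg j
    have := Fintype.mem_piFinset.mp hg j
    rw [hSdef, Finset.mem_attachFin, Finset.mem_Ico] at this
    exact this
  have key : ∀ g ∈ T, ℓ/4 ≤ Fintype.card (A ⊕ B ⊕ (B × Fin ℓ)) -
      FF.PRMVS (Gconn GA (⊥ : SimpleGraph B) f ℓ) (Φ g) b := by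
    intro g hg
    simp only [hΦdef]
    have hle : FF.PRMVS (Gconn GA (⊥ : SimpleGraph B) f ℓ)
        (Finset.univ.image
          (fun j : {j : B // j ≠ b₀} => Sum.inr (Sum.inr (j.1, g j)))) b
        ≤ Fintype.card (A ⊕ B ⊕ (B × Fin ℓ)) - ℓ/4 := by
      apply csSup_le'
      rintro k ⟨p, hp, rfl⟩
      have hc := core_burnt hb GA f hcB hl b₀ g (hxg g hg) p hp
      omega
    omega
  have hmapinj : ∀ g : {j : B // j ≠ b₀} → Fin ℓ, Function.Injective
      (fun j : {j : B // j ≠ b₀} =>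
        (Sum.inr (Sum.inr (j.1, g j)) : A ⊕ B ⊕ (B × Fin ℓ))) := by
    intro g j j' h
    simp only [Sum.inr.injEq, Prod.mk.injEq] at h
    exact Subtype.ext h.1
  have hTsub : T.image Φ ⊆ Finset.univ.powersetCard b := by
    intro F hF
    simp only [Finset.mem_image] at hF
    obtain ⟨g, hg, rfl⟩ := hF
    rw [Finset.mem_powersetCard_univ, hΦdef,
      Finset.card_image_of_injective _ (hmapinj g), Finset.card_univ, hcardJ]
  have hΦinj : ∀ g ∈ T, ∀ g' ∈ T, Φ g = Φ g' → g = g' := by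
    intro g hg g' hg' he
    funext j
    have hmem : (Sum.inr (Sum.inr (j.1, g j)) : A ⊕ B ⊕ (B × Fin ℓ)) ∈ Φ g' := by
      rw [← he, hΦdef]
      exact Finset.mem_image_of_mem _ (Finset.mem_univ j)
    rw [hΦdef] at hmem
    simp only [Finset.mem_image, Finset.mem_univ, true_and] at hmem
    obtain ⟨j', hj'⟩ := hmem
    simp only [Sum.inr.injEq, Prod.mk.injEq] at hj'
    have h1 : j' = j := Subtype.ext hj'.1
    subst h1
    exact hj'.2.symm
  have hTcard : (ℓ/4)^b ≤ T.card := by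
    rw [hTdef, Fintype.card_piFinset]
    simp only [hSdef, Finset.card_attachFin, Nat.card_Ico]
    rw [Finset.prod_const, Finset.card_univ, hcardJ]
    exact Nat.pow_le_pow_left (by omega) b
  have hsum : (ℓ/4)^b * (ℓ/4) ≤
      ∑ F ∈ (Finset.univ : Finset (A ⊕ B ⊕ (B × Fin ℓ))).powersetCard b,
        (Fintype.card (A ⊕ B ⊕ (B × Fin ℓ)) -
          FF.PRMVS (Gconn GA (⊥ : SimpleGraph B) f ℓ) F b) :=
    calc (ℓ/4)^b * (ℓ/4) ≤ T.card * (ℓ/4) := mul_le_mul_left hTcard _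
      _ = ∑ _g ∈ T, ℓ/4 := by rw [Finset.sum_const, smul_eq_mul]
      _ ≤ ∑ g ∈ T, (Fintype.card (A ⊕ B ⊕ (B × Fin ℓ)) -
            FF.PRMVS (Gconn GA (⊥ : SimpleGraph B) f ℓ) (Φ g) b) :=
        Finset.sum_le_sum key
      _ = ∑ F ∈ T.image Φ, (Fintype.card (A ⊕ B ⊕ (B × Fin ℓ)) -
            FF.PRMVS (Gconn GA (⊥ : SimpleGraph B) f ℓ) F b) :=
        by rw [Finset.sum_image hΦinj]
      _ ≤ _ := Finset.sum_le_sum_of_subset hTsub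
  have h5 : ℓ ≤ 5 * (ℓ/4) := by omega
  calc ℓ^(b+1) ≤ (5*(ℓ/4))^(b+1) := Nat.pow_le_pow_left h5 _
    _ = 5^(b+1) * (ℓ/4)^(b+1) := mul_pow _ _ _
    _ = 5^(b+1) * ((ℓ/4)^b * (ℓ/4)) := by ring
    _ ≤ _ := mul_le_mul_right hsum _
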